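/- Fix integers L ≥ 2, k ≥ 1, n ≥ 4k, a string η ∈ Λ^k over the alphabet Λ = [L]² (so |Λ| = L²), and ε ∈ (0, 1/4). For λ ∈ Λ^n let Count(λ, η) be the number of indices i ∈ {0,…,n-k} such that (λ_{i+1},…,λ_{i+k}) = η. Then the number of λ ∈ Λ^n with |Count(λ, η) - (n-k+1)·L^{-2k}| ≥ ε·(n-k+1)·L^{-2k} is at most C(k)·exp(-c(k,ε)·n)·|Λ|^n for constants C(k) > 0 and c(k,ε) > 0 depending only on k, L, ε. -/

import Mathlib

open scoped Classical

lemma sum_prod_blocks {n m k : ℕ} {Λ : Type*} [Fintype Λ]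
    (ψ : Fin m × Fin k → Fin n) (hinj : Function.Injective ψ)
    (F : (Fin k → Λ) → ℝ) :
    ∑ lam : Fin n → Λ, ∏ j : Fin m, F (fun l => lam (ψ (j, l)))
      = (Fintype.card Λ : ℝ) ^ (n - m * k) * (∑ s : Fin k → Λ, F s) ^ m := by
  classical
  set R : Set (Fin n) := Set.range ψ with hR
  let E : (Fin n → Λ) ≃ ((∀ i : {i // i ∈ R}, Λ) × (∀ i : {i // i ∉ R}, Λ)) :=
    Equiv.piEquivPiSubtypeProd (· ∈ R) (fun _ => Λ)
  have hmem : ∀ j l, ψ (j, l) ∈ R := fun j l => Set.mem_range_self _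
  have h1 : ∑ lam : Fin n → Λ, ∏ j : Fin m, F (fun l => lam (ψ (j, l)))
      = ∑ uv : (∀ i : {i // i ∈ R}, Λ) × (∀ i : {i // i ∉ R}, Λ),
          ∏ j : Fin m, F (fun l => uv.1 ⟨ψ (j, l), hmem j l⟩) := by
    rw [← Equiv.sum_comp E.symm (fun lam => ∏ j : Fin m, F (fun l => lam (ψ (j, l))))]
    refine Finset.sum_congr rfl (fun uv _ => ?_)
    refine Finset.prod_congr rfl (fun j _ => ?_)
    congr 1
    funext l
    simp [E, Equiv.piEquivPiSubtypeProd, hmem j l]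
  rw [h1, Fintype.sum_prod_type_right]
  have hcardR : Fintype.card {i // i ∈ R} = m * k := by
    rw [Fintype.card_eq_nat_card]
    exact (Nat.card_range_of_injective hinj).trans (by simp [Nat.card_eq_fintype_card])
  have hcardC : Fintype.card {i // i ∉ R} = n - m * k := by
    have := Fintype.card_subtype_compl (p := (· ∈ R))
    simp only [hcardR] at this ⊢
    simpa using this
  have h2 : ∀ v : (∀ i : {i // i ∉ R}, Λ),
      (∑ u : (∀ i : {i // i ∈ R}, Λ), ∏ j : Fin m, F (fun l => u ⟨ψ (j, l), hmem j l⟩))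
        = (∑ s : Fin k → Λ, F s) ^ m := by
    intro v
    let e : (Fin m × Fin k) ≃ {i // i ∈ R} := Equiv.ofInjective ψ hinj
    let e2 : (Fin m → Fin k → Λ) ≃ (∀ i : {i // i ∈ R}, Λ) :=
      (Equiv.curry _ _ _).symm.trans (Equiv.arrowCongr e (Equiv.refl Λ))
    rw [← Equiv.sum_comp e2 (fun u => ∏ j : Fin m, F (fun l => u ⟨ψ (j, l), hmem j l⟩))]
    have : ∀ w : Fin m → Fin k → Λ, ∀ j l, (e2 w) ⟨ψ (j, l), hmem j l⟩ = w j l := by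
      intro w j l
      have : (⟨ψ (j, l), hmem j l⟩ : {i // i ∈ R}) = e (j, l) := rfl
      simp [e2, this, Equiv.arrowCongr]
    simp only [this]
    rw [← Fintype.prod_sum (fun (_ : Fin m) (s : Fin k → Λ) => F s)]
    · simp
  calc ∑ v : (∀ i : {i // i ∉ R}, Λ),
        (∑ u : (∀ i : {i // i ∈ R}, Λ), ∏ j : Fin m, F (fun l => u ⟨ψ (j, l), hmem j l⟩))
      = ∑ v : (∀ i : {i // i ∉ R}, Λ), (∑ s : Fin k → Λ, F s) ^ m := by
        exact Finset.sum_congr rfl (fun v _ => h2 v)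
    _ = (Fintype.card Λ : ℝ) ^ (n - m * k) * (∑ s : Fin k → Λ, F s) ^ m := by
        rw [Finset.sum_const, Finset.card_univ, Fintype.card_pi]
        simp [hcardC, nsmul_eq_mul]

lemma card_le_mgf_upper {Ω : Type*} [Fintype Ω] (f : Ω → ℕ) (x a : ℝ) (hx : 1 ≤ x)
    (S : Finset Ω) (hS : ∀ ω ∈ S, a ≤ (f ω : ℝ)) :
    (S.card : ℝ) ≤ x ^ (-a) * ∑ ω : Ω, (x : ℝ) ^ (f ω) := by
  have hx0 : (0:ℝ) < x := lt_of_lt_of_le one_pos hx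
  have h1 : ∀ ω ∈ S, (1:ℝ) ≤ x ^ (-a) * x ^ (f ω) := by
    intro ω hω
    have : x ^ (-a) * x ^ (f ω) = x ^ ((f ω : ℝ) - a) := by
      rw [← Real.rpow_natCast x (f ω), ← Real.rpow_add hx0]; ring_nf
    rw [this]
    exact Real.one_le_rpow hx (by linarith [hS ω hω])
  calc (S.card : ℝ) = ∑ ω ∈ S, (1:ℝ) := by simp
    _ ≤ ∑ ω ∈ S, x ^ (-a) * x ^ (f ω) := Finset.sum_le_sum h1
    _ ≤ ∑ ω : Ω, x ^ (-a) * x ^ (f ω) := by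
        refine Finset.sum_le_sum_of_subset_of_nonneg (Finset.subset_univ S) ?_
        intro ω _ _
        positivity
    _ = x ^ (-a) * ∑ ω : Ω, (x:ℝ) ^ (f ω) := by rw [Finset.mul_sum]

lemma card_le_mgf_lower {Ω : Type*} [Fintype Ω] (f : Ω → ℕ) (y b : ℝ) (hy0 : 0 < y)
    (hy1 : y ≤ 1) (S : Finset Ω) (hS : ∀ ω ∈ S, (f ω : ℝ) ≤ b) :
    (S.card : ℝ) ≤ y ^ (-b) * ∑ ω : Ω, (y : ℝ) ^ (f ω) := by
  have h1 : ∀ ω ∈ S, (1:ℝ) ≤ y ^ (-b) * y ^ (f ω) := by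
    intro ω hω
    have : y ^ (-b) * y ^ (f ω) = y ^ ((f ω : ℝ) - b) := by
      rw [← Real.rpow_natCast y (f ω), ← Real.rpow_add hy0]; ring_nf
    rw [this]
    exact Real.one_le_rpow_of_pos_of_le_one_of_nonpos hy0 hy1 (by linarith [hS ω hω])
  calc (S.card : ℝ) = ∑ ω ∈ S, (1:ℝ) := by simp
    _ ≤ ∑ ω ∈ S, y ^ (-b) * y ^ (f ω) := Finset.sum_le_sum h1
    _ ≤ ∑ ω : Ω, y ^ (-b) * y ^ (f ω) := by
        refine Finset.sum_le_sum_of_subset_of_nonneg (Finset.subset_univ S) ?_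
        intro ω _ _
        positivity
    _ = y ^ (-b) * ∑ ω : Ω, (y:ℝ) ^ (f ω) := by rw [Finset.mul_sum]

lemma log_ge_aux {x : ℝ} (hx : 0 < x) : 1 - x⁻¹ ≤ Real.log x :=
  Real.one_sub_inv_le_log_of_pos hx

lemma unit_upper {ε B : ℝ} (hε0 : 0 < ε) (hε1 : ε < 1/4) (hB : 1 ≤ B) :
    (1 + ε/2) ^ (-((1+ε)/B)) * (B + ε/2) ≤ Real.exp (-(ε^2/(8*B))) * B := by
  have hB0 : (0:ℝ) < B := lt_of_lt_of_le one_pos hB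
  have hs0 : (0:ℝ) < 1 + ε/2 := by linarith
  have hlog : ε/2/(1 + ε/2) ≤ Real.log (1 + ε/2) := by
    have := Real.one_sub_inv_le_log_of_pos hs0
    have h2 : 1 - (1 + ε/2)⁻¹ = ε/2/(1 + ε/2) := by
      field_simp; ring
    linarith [h2 ▸ this]
  have hrw : (1 + ε/2) ^ (-((1+ε)/B)) = Real.exp (-((1+ε)/B) * Real.log (1 + ε/2)) := by
    rw [Real.rpow_def_of_pos hs0]; ring_nf
  have hBe : B + ε/2 ≤ B * Real.exp (ε/(2*B)) := by
    have h1 : 1 + ε/(2*B) ≤ Real.exp (ε/(2*B)) := by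
      linarith [Real.add_one_le_exp (ε/(2*B))]
    calc B + ε/2 = B * (1 + ε/(2*B)) := by field_simp
      _ ≤ B * Real.exp (ε/(2*B)) := by
          exact mul_le_mul_of_nonneg_left h1 (le_of_lt hB0)
  have key : ε/(2*B) - (1+ε)/B * Real.log (1 + ε/2) ≤ -(ε^2/(8*B)) := by
    have hkey2 : ε/2 + ε^2/8 ≤ (1+ε) * (ε/2/(1 + ε/2)) := by
      have h3 : (1+ε) * (ε/2/(1 + ε/2)) = (1+ε) * (ε/2) / (1 + ε/2) := by ring
      rw [h3, le_div_iff₀ hs0]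
      nlinarith
    have hmul : (1+ε) * (ε/2/(1 + ε/2)) ≤ (1+ε) * Real.log (1 + ε/2) :=
      mul_le_mul_of_nonneg_left hlog (by linarith)
    have hfin : ε/2 + ε^2/8 ≤ (1+ε) * Real.log (1 + ε/2) := le_trans hkey2 hmul
    have e1 : ε/(2*B) - (1+ε)/B * Real.log (1 + ε/2)
        = (ε/2 - (1+ε) * Real.log (1 + ε/2))/B := by field_simp
    have e2 : -(ε^2/(8*B)) = (-(ε^2/8))/B := by field_simp
    rw [e1, e2]
    gcongr
    linarith
  calc (1 + ε/2) ^ (-((1+ε)/B)) * (B + ε/2)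
      ≤ Real.exp (-((1+ε)/B) * Real.log (1 + ε/2)) * (B * Real.exp (ε/(2*B))) := by
        rw [hrw]
        exact mul_le_mul_of_nonneg_left hBe (le_of_lt (Real.exp_pos _))
    _ = Real.exp (-((1+ε)/B) * Real.log (1 + ε/2)) * Real.exp (ε/(2*B)) * B := by ring
    _ = Real.exp (ε/(2*B) - (1+ε)/B * Real.log (1 + ε/2)) * B := by
        rw [← Real.exp_add]
        congr 2
        ring
    _ ≤ Real.exp (-(ε^2/(8*B))) * B := by
        exact mul_le_mul_of_nonneg_right (Real.exp_le_exp.mpr key) (le_of_lt hB0)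

lemma unit_lower {ε B : ℝ} (hε0 : 0 < ε) (hε1 : ε < 1/4) (hB : 1 ≤ B) :
    (1 - ε/2) ^ (-((1-ε)/B)) * (B - ε/2) ≤ Real.exp (-(ε^2/(8*B))) * B := by
  have hB0 : (0:ℝ) < B := lt_of_lt_of_le one_pos hB
  have hs0 : (0:ℝ) < 1 - ε/2 := by linarith
  have hlog : -(ε/2/(1 - ε/2)) ≤ Real.log (1 - ε/2) := by
    have := Real.one_sub_inv_le_log_of_pos hs0
    have h2 : 1 - (1 - ε/2)⁻¹ = -(ε/2/(1 - ε/2)) := by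
      rw [eq_comm, neg_eq_iff_eq_neg, eq_comm, neg_sub, eq_div_iff hs0.ne', sub_mul,
        inv_mul_cancel₀ hs0.ne']
      ring
    linarith [h2 ▸ this]
  have hrw : (1 - ε/2) ^ (-((1-ε)/B)) = Real.exp (-((1-ε)/B) * Real.log (1 - ε/2)) := by
    rw [Real.rpow_def_of_pos hs0]; ring_nf
  have hBe : B - ε/2 ≤ B * Real.exp (-(ε/(2*B))) := by
    have h1 : 1 - ε/(2*B) ≤ Real.exp (-(ε/(2*B))) := by
      linarith [Real.add_one_le_exp (-(ε/(2*B)))]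
    calc B - ε/2 = B * (1 - ε/(2*B)) := by field_simp
      _ ≤ B * Real.exp (-(ε/(2*B))) := mul_le_mul_of_nonneg_left h1 (le_of_lt hB0)
  have key : -(ε/(2*B)) - (1-ε)/B * Real.log (1 - ε/2) ≤ -(ε^2/(8*B)) := by
    have hkey2 : (1-ε) * (ε/2/(1 - ε/2)) ≤ ε/2 - ε^2/8 := by
      have h3 : (1-ε) * (ε/2/(1 - ε/2)) = (1-ε) * (ε/2) / (1 - ε/2) := by ring
      rw [h3, div_le_iff₀ hs0]
      nlinarith
    have hmul : (1-ε) * (-Real.log (1 - ε/2)) ≤ (1-ε) * (ε/2/(1 - ε/2)) :=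
      mul_le_mul_of_nonneg_left (by linarith) (by linarith)
    have hfin : (1-ε) * (-Real.log (1 - ε/2)) ≤ ε/2 - ε^2/8 := le_trans hmul hkey2
    have e1 : -(ε/(2*B)) - (1-ε)/B * Real.log (1 - ε/2)
        = ((1-ε) * (-Real.log (1 - ε/2)) - ε/2)/B := by field_simp; ring
    have e2 : -(ε^2/(8*B)) = (-(ε^2/8))/B := by field_simp
    rw [e1, e2]
    gcongr
    linarith
  calc (1 - ε/2) ^ (-((1-ε)/B)) * (B - ε/2)
      ≤ Real.exp (-((1-ε)/B) * Real.log (1 - ε/2)) * (B * Real.exp (-(ε/(2*B)))) := by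
        rw [hrw]
        exact mul_le_mul_of_nonneg_left hBe (le_of_lt (Real.exp_pos _))
    _ = Real.exp (-((1-ε)/B) * Real.log (1 - ε/2)) * Real.exp (-(ε/(2*B))) * B := by ring
    _ = Real.exp (-(ε/(2*B)) - (1-ε)/B * Real.log (1 - ε/2)) * B := by
        rw [← Real.exp_add]
        congr 2
        ring
    _ ≤ Real.exp (-(ε^2/(8*B))) * B :=
        mul_le_mul_of_nonneg_right (Real.exp_le_exp.mpr key) (le_of_lt hB0)

lemma pow_card_filter {α : Type*} (s : Finset α) (p : α → Prop) [DecidablePred p] (x : ℝ) :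
    x ^ (s.filter p).card = ∏ a ∈ s, ite (p a) x 1 := by
  rw [Finset.prod_ite]
  simp

lemma filter_mod_image (d r N : ℕ) (hd : 0 < d) (hrd : r < d) (hrN : r < N) :
    (Finset.range N).filter (fun i => i % d = r)
      = (Finset.range ((N - 1 - r)/d + 1)).image (fun j => r + d*j) := by
  ext i
  simp only [Finset.mem_filter, Finset.mem_range, Finset.mem_image]
  constructor
  · rintro ⟨hiN, hmod⟩
    refine ⟨i / d, ?_, ?_⟩
    · have h1 : d * (i / d) = i - r := by
        have := Nat.mod_add_div i d
        omega
      have h2 : i - r ≤ N - 1 - r := by omega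
      have h3 : i / d = (i - r) / d := by
        rw [← h1, Nat.mul_div_cancel_left _ hd]
      rw [h3]
      have := Nat.div_le_div_right (c := d) h2
      omega
    · have := Nat.mod_add_div i d
      omega
  · rintro ⟨j, hj, rfl⟩
    have h1' : d * j ≤ N - 1 - r := by
      have hj' : j ≤ (N - 1 - r)/d := by omega
      calc d * j ≤ d * ((N - 1 - r)/d) := Nat.mul_le_mul_left d hj'
        _ ≤ N - 1 - r := Nat.mul_div_le _ _
    constructor
    · omega
    · rw [Nat.add_mul_mod_self_left]
      exact Nat.mod_eq_of_lt hrd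

lemma class_mgf (L k n r : ℕ) (hk : 1 ≤ k) (hL : 1 ≤ L) (h3k : 3*k ≤ n) (hr : r < 2*k)
    (η : Fin k → Fin L × Fin L) (x : ℝ) :
    ∑ lam : Fin n → Fin L × Fin L,
        x ^ (((Finset.range ((n - k - r)/(2*k) + 1)).filter (fun j =>
          ∀ jj : Fin k, ∀ h : (r + 2*k*j) + jj.val < n,
            lam ⟨(r + 2*k*j) + jj.val, h⟩ = η jj)).card)
      = ((L:ℝ)^2) ^ (n - ((n - k - r)/(2*k) + 1)*k)
          * (x - 1 + ((L:ℝ)^2)^k) ^ ((n - k - r)/(2*k) + 1) := by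
  classical
  set m := (n - k - r)/(2*k) + 1 with hm
  have hrn : r + k ≤ n := by omega
  have hpos : 0 < 2*k := by omega
  have hbound : ∀ j, j < m → r + 2*k*j ≤ n - k := by
    intro j hj
    have hj' : j ≤ (n - k - r)/(2*k) := by omega
    have : 2*k*j ≤ n - k - r := by
      calc 2*k*j ≤ 2*k*((n - k - r)/(2*k)) := Nat.mul_le_mul_left _ hj'
        _ ≤ n - k - r := Nat.mul_div_le _ _
    omega
  have hψb : ∀ (j : Fin m) (l : Fin k), r + 2*k*j.val + l.val < n := by
    intro j l
    have := hbound j.val j.isLt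
    have := l.isLt
    omega
  set ψ : Fin m × Fin k → Fin n := fun p => ⟨r + 2*k*p.1.val + p.2.val, hψb p.1 p.2⟩ with hψ
  have hinj : Function.Injective ψ := by
    rintro ⟨j, l⟩ ⟨j', l'⟩ h
    have hval : r + 2*k*j.val + l.val = r + 2*k*j'.val + l'.val := by
      simpa [hψ] using congrArg Fin.val h
    have hl := l.isLt
    have hl' := l'.isLt
    have h1 : 2*k*j.val + l.val = 2*k*j'.val + l'.val := by omega
    have hjj : j.val = j'.val := by
      have e1 : (2*k*j.val + l.val)/(2*k) = j.val := by
        rw [Nat.mul_add_div hpos]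
        simp [Nat.div_eq_of_lt (by omega : l.val < 2*k)]
      have e2 : (2*k*j'.val + l'.val)/(2*k) = j'.val := by
        rw [Nat.mul_add_div hpos]
        simp [Nat.div_eq_of_lt (by omega : l'.val < 2*k)]
      rw [← e1, ← e2, h1]
    have hll : l.val = l'.val := by
      rw [hjj] at h1
      omega
    ext <;> simp [hjj, hll]
  set F : (Fin k → Fin L × Fin L) → ℝ := fun s => ite (s = η) x 1 with hF
  have step1 : ∀ lam : Fin n → Fin L × Fin L,
      x ^ (((Finset.range m).filter (fun j =>
          ∀ jj : Fin k, ∀ h : (r + 2*k*j) + jj.val < n,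
            lam ⟨(r + 2*k*j) + jj.val, h⟩ = η jj)).card)
        = ∏ j : Fin m, F (fun l => lam (ψ (j, l))) := by
    intro lam
    rw [pow_card_filter]
    rw [← Fin.prod_univ_eq_prod_range (fun j =>
      ite (∀ jj : Fin k, ∀ h : (r + 2*k*j) + jj.val < n,
        lam ⟨(r + 2*k*j) + jj.val, h⟩ = η jj) x 1) m]
    refine Finset.prod_congr rfl (fun j _ => ?_)
    have hiff : (∀ jj : Fin k, ∀ h : (r + 2*k*j.val) + jj.val < n,
        lam ⟨(r + 2*k*j.val) + jj.val, h⟩ = η jj) ↔ ((fun l => lam (ψ (j, l))) = η) := by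
      constructor
      · intro hp
        funext l
        exact hp l (hψb j l)
      · intro hp jj h
        have := congrFun hp jj
        simpa [hψ] using this
    simp only [hF]
    rw [if_congr hiff rfl rfl]
  calc ∑ lam : Fin n → Fin L × Fin L,
        x ^ (((Finset.range m).filter (fun j =>
          ∀ jj : Fin k, ∀ h : (r + 2*k*j) + jj.val < n,
            lam ⟨(r + 2*k*j) + jj.val, h⟩ = η jj)).card)
      = ∑ lam : Fin n → Fin L × Fin L, ∏ j : Fin m, F (fun l => lam (ψ (j, l))) :=
        Finset.sum_congr rfl (fun lam _ => step1 lam)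
    _ = (Fintype.card (Fin L × Fin L) : ℝ) ^ (n - m * k) * (∑ s : Fin k → Fin L × Fin L, F s) ^ m :=
        sum_prod_blocks ψ hinj F
    _ = ((L:ℝ)^2) ^ (n - m*k) * (x - 1 + ((L:ℝ)^2)^k) ^ m := by
        congr 1
        · norm_num [Fintype.card_prod, sq]
        · congr 1
          have : ∑ s : Fin k → Fin L × Fin L, F s
              = ∑ s : Fin k → Fin L × Fin L, ((if s = η then x - 1 else 0) + 1) := by
            refine Finset.sum_congr rfl (fun s _ => ?_)
            by_cases h : s = η <;> simp [hF, h]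
          rw [this, Finset.sum_add_distrib, Finset.sum_ite_eq' Finset.univ η (fun _ => x - 1)]
          simp [Fintype.card_pi, Fintype.card_prod, sq]

lemma pow_unit_upper {ε B : ℝ} (hε0 : 0 < ε) (hε1 : ε < 1/4) (hB : 1 ≤ B) (M : ℕ) :
    (1 + ε/2) ^ (-((1+ε)*M/B)) * (B + ε/2)^M
      ≤ Real.exp (-(ε^2/(8*B)) * M) * B^M := by
  have hx0 : (0:ℝ) < 1 + ε/2 := by linarith
  have h1 : (1 + ε/2) ^ (-((1+ε)*M/B)) = ((1 + ε/2) ^ (-((1+ε)/B)))^M := by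
    rw [← Real.rpow_natCast ((1 + ε/2) ^ (-((1+ε)/B))) M, ← Real.rpow_mul hx0.le]
    congr 1
    ring
  rw [h1, ← mul_pow]
  calc ((1 + ε/2) ^ (-((1+ε)/B)) * (B + ε/2))^M
      ≤ (Real.exp (-(ε^2/(8*B))) * B)^M := by
        apply pow_le_pow_left₀ _ (unit_upper hε0 hε1 hB)
        positivity
    _ = Real.exp (-(ε^2/(8*B)) * M) * B^M := by
        rw [mul_pow, ← Real.exp_nat_mul]
        ring_nf
lemma pow_unit_lower {ε B : ℝ} (hε0 : 0 < ε) (hε1 : ε < 1/4) (hB : 1 ≤ B) (M : ℕ) :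
    (1 - ε/2) ^ (-((1-ε)*M/B)) * (B - ε/2)^M
      ≤ Real.exp (-(ε^2/(8*B)) * M) * B^M := by
  have hx0 : (0:ℝ) < 1 - ε/2 := by linarith
  have h1 : (1 - ε/2) ^ (-((1-ε)*M/B)) = ((1 - ε/2) ^ (-((1-ε)/B)))^M := by
    rw [← Real.rpow_natCast ((1 - ε/2) ^ (-((1-ε)/B))) M, ← Real.rpow_mul hx0.le]
    congr 1
    ring
  rw [h1, ← mul_pow]
  calc ((1 - ε/2) ^ (-((1-ε)/B)) * (B - ε/2))^M
      ≤ (Real.exp (-(ε^2/(8*B))) * B)^M := by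
        apply pow_le_pow_left₀ _ (unit_lower hε0 hε1 hB)
        have : (0:ℝ) < B - ε/2 := by linarith
        positivity
    _ = Real.exp (-(ε^2/(8*B)) * M) * B^M := by
        rw [mul_pow, ← Real.exp_nat_mul]
        ring_nf

lemma count_decomp (k n : ℕ) (hk : 1 ≤ k) (h3k : 3*k ≤ n) (P : ℕ → Prop) [DecidablePred P] :
    ((Finset.range (n-k+1)).filter P).card
      = ∑ r ∈ Finset.range (2*k),
          ((Finset.range ((n-k-r)/(2*k)+1)).filter (fun j => P (r + 2*k*j))).card := by
  classical
  have hpos : 0 < 2*k := by omega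
  rw [Finset.card_eq_sum_card_fiberwise
    (f := fun i => i % (2*k)) (t := Finset.range (2*k))
    (fun x _ => Finset.mem_range.mpr (Nat.mod_lt _ hpos))]
  refine Finset.sum_congr rfl (fun r hr => ?_)
  have hr2k : r < 2*k := Finset.mem_range.mp hr
  have hrN : r < n - k + 1 := by omega
  have e0 : ((Finset.range (n-k+1)).filter P).filter (fun i => i % (2*k) = r)
      = ((Finset.range (n-k+1)).filter (fun i => i % (2*k) = r)).filter P := by
    rw [Finset.filter_comm]
  rw [e0, filter_mod_image (2*k) r (n-k+1) hpos hr2k hrN]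
  have e1 : n - k + 1 - 1 - r = n - k - r := by omega
  rw [e1]
  have e2 : ((Finset.range ((n-k-r)/(2*k)+1)).image (fun j => r + 2*k*j)).filter P
      = ((Finset.range ((n-k-r)/(2*k)+1)).filter (fun j => P (r + 2*k*j))).image
          (fun j => r + 2*k*j) := by
    rw [Finset.filter_image]
  rw [e2, Finset.card_image_of_injective]
  intro a b hab
  simp only at hab
  have h2 : 2*k*a = 2*k*b := by omega
  exact Nat.eq_of_mul_eq_mul_left hpos h2

lemma mr_facts (k n r : ℕ) (hk : 1 ≤ k) (h4k : 4*k ≤ n) (hr : r < 2*k) :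
    ((n-k-r)/(2*k)+1) * k ≤ n ∧ n ≤ 8*k*((n-k-r)/(2*k)+1) := by
  have h1 : 2*k*((n-k-r)/(2*k)) ≤ n-k-r := Nat.mul_div_le _ _
  have h2 := Nat.div_add_mod (n-k-r) (2*k)
  have h3 : (n-k-r) % (2*k) < 2*k := Nat.mod_lt _ (by omega)
  have e3 : ((n-k-r)/(2*k)+1) * k * 2 = 2*k*((n-k-r)/(2*k)) + 2*k := by ring
  have e5 : 8*k*((n-k-r)/(2*k)+1) = 4*(2*k*((n-k-r)/(2*k))) + 8*k := by ring
  omega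

set_option maxHeartbeats 1600000 in
/-- Large-deviation bound for the number of occurrences of a fixed substring `η ∈ Λ^k`
(with `Λ = [L]²`) in strings `λ ∈ Λ^n`: the number of strings whose substring count
deviates from its mean `(n-k+1)/L^{2k}` by a factor `ε` is exponentially small compared
to `|Λ|^n = L^{2n}`. -/
theorem stmt6 (L : ℕ) (hL : 2 ≤ L) (k : ℕ) (hk : 1 ≤ k) (ε : ℝ)
    (hε : ε ∈ Set.Ioo (0 : ℝ) (1 / 4)) :
    ∃ C > (0 : ℝ), ∃ c > (0 : ℝ), ∀ n : ℕ, 4 * k ≤ n → ∀ η : Fin k → Fin L × Fin L,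
      (Nat.card {lam : Fin n → Fin L × Fin L |
          |(((Finset.range (n - k + 1)).filter (fun i =>
              ∀ j : Fin k, ∀ h : i + j.val < n, lam ⟨i + j.val, h⟩ = η j)).card : ℝ)
            - ((n - k + 1 : ℕ) : ℝ) / (L : ℝ) ^ (2 * k)|
          ≥ ε * (((n - k + 1 : ℕ) : ℝ) / (L : ℝ) ^ (2 * k))} : ℝ)
        ≤ C * Real.exp (-c * n) * (L : ℝ) ^ (2 * n) := by
  classical
  obtain ⟨hε0, hε1⟩ := hε
  have hk0 : (0:ℝ) < (k:ℝ) := by exact_mod_cast Nat.pos_of_ne_zero (by omega)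
  have hL1 : (1:ℝ) ≤ (L:ℝ) := by exact_mod_cast (by omega : 1 ≤ L)
  have hL0 : (0:ℝ) < (L:ℝ) := by linarith
  refine ⟨4*k, by positivity, ε^2/(64*k*((L:ℝ)^2)^k), by positivity, ?_⟩
  intro n h4k η
  have h3k : 3*k ≤ n := by omega
  set B : ℝ := ((L:ℝ)^2)^k with hB
  have hB1 : (1:ℝ) ≤ B := one_le_pow₀ (by nlinarith)
  have hB0 : (0:ℝ) < B := by linarith
  have hBeq : (L:ℝ)^(2*k) = B := by rw [pow_mul]
  set c : ℝ := ε^2/(64*k*B) with hc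
  set N := n - k + 1 with hN
  set P : (Fin n → Fin L × Fin L) → Prop := fun lam =>
    |(((Finset.range N).filter (fun i =>
        ∀ j : Fin k, ∀ h : i + j.val < n, lam ⟨i + j.val, h⟩ = η j)).card : ℝ)
      - ((N : ℕ) : ℝ) / (L : ℝ) ^ (2 * k)|
      ≥ ε * (((N : ℕ) : ℝ) / (L : ℝ) ^ (2 * k)) with hP
  have hcard : (Nat.card {lam : Fin n → Fin L × Fin L | P lam} : ℝ)
      = ((Finset.univ.filter P).card : ℝ) := by
    congr 1
    rw [Nat.card_eq_fintype_card]
    exact Fintype.card_subtype P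
  rw [hcard]
  set mm : ℕ → ℕ := fun r => (n - k - r)/(2*k) + 1 with hmm
  set XX : ℕ → (Fin n → Fin L × Fin L) → ℕ := fun r lam =>
    ((Finset.range (mm r)).filter (fun j =>
      ∀ jj : Fin k, ∀ h : (r + 2*k*j) + jj.val < n,
        lam ⟨(r + 2*k*j) + jj.val, h⟩ = η jj)).card with hXX
  -- decomposition of the count
  have hdecomp : ∀ lam : Fin n → Fin L × Fin L,
      ((Finset.range N).filter (fun i =>
        ∀ j : Fin k, ∀ h : i + j.val < n, lam ⟨i + j.val, h⟩ = η j)).card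
      = ∑ r ∈ Finset.range (2*k), XX r lam :=
    fun lam => count_decomp k n hk h3k _
  have hNdecomp : N = ∑ r ∈ Finset.range (2*k), mm r := by
    have := count_decomp k n hk h3k (fun _ => True)
    simpa using this
  -- the two bad events per class
  set Up : ℕ → Finset (Fin n → Fin L × Fin L) := fun r =>
    Finset.univ.filter (fun lam => (1+ε)*(mm r)/B ≤ (XX r lam : ℝ)) with hUp
  set Lo : ℕ → Finset (Fin n → Fin L × Fin L) := fun r =>
    Finset.univ.filter (fun lam => (XX r lam : ℝ) ≤ (1-ε)*(mm r)/B) with hLo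
  have hsub : Finset.univ.filter P ⊆
      (Finset.range (2*k)).biUnion (fun r => Up r ∪ Lo r) := by
    intro lam hlam
    rw [Finset.mem_filter] at hlam
    obtain ⟨-, hlam⟩ := hlam
    rw [Finset.mem_biUnion]
    by_contra hcon
    push_neg at hcon
    have hall : ∀ r ∈ Finset.range (2*k),
        |(XX r lam : ℝ) - (mm r : ℝ)/B| < ε * ((mm r : ℝ)/B) := by
      intro r hr
      have := hcon r hr
      rw [Finset.mem_union, Finset.mem_filter, Finset.mem_filter] at this
      push_neg at this
      obtain ⟨h1, h2⟩ := this
      have h1' := h1 (Finset.mem_univ lam)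
      have h2' := h2 (Finset.mem_univ lam)
      rw [abs_lt]
      constructor
      · have : (1-ε)*(mm r : ℝ)/B = (mm r : ℝ)/B - ε * ((mm r : ℝ)/B) := by ring
        nlinarith [h2']
      · have : (1+ε)*(mm r : ℝ)/B = (mm r : ℝ)/B + ε * ((mm r : ℝ)/B) := by ring
        nlinarith [h1']
    have hsum : |(((Finset.range N).filter (fun i =>
        ∀ j : Fin k, ∀ h : i + j.val < n, lam ⟨i + j.val, h⟩ = η j)).card : ℝ)
        - ((N : ℕ) : ℝ) / (L : ℝ) ^ (2 * k)|
        < ε * (((N : ℕ) : ℝ) / (L : ℝ) ^ (2 * k)) := by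
      rw [hBeq]
      have e1 : (((Finset.range N).filter (fun i =>
          ∀ j : Fin k, ∀ h : i + j.val < n, lam ⟨i + j.val, h⟩ = η j)).card : ℝ)
          = ∑ r ∈ Finset.range (2*k), (XX r lam : ℝ) := by
        rw [hdecomp lam]
        push_cast
        rfl
      have e2 : ((N : ℕ) : ℝ)/B = ∑ r ∈ Finset.range (2*k), (mm r : ℝ)/B := by
        rw [← Finset.sum_div]
        congr 1
        rw [hNdecomp]
        push_cast
        rfl
      rw [e1, e2, ← Finset.sum_sub_distrib]
      calc |∑ r ∈ Finset.range (2*k), ((XX r lam : ℝ) - (mm r : ℝ)/B)|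
          ≤ ∑ r ∈ Finset.range (2*k), |(XX r lam : ℝ) - (mm r : ℝ)/B| :=
            Finset.abs_sum_le_sum_abs _ _
        _ < ∑ r ∈ Finset.range (2*k), ε * ((mm r : ℝ)/B) :=
            Finset.sum_lt_sum_of_nonempty (by simp; omega) hall
        _ = ε * (∑ r ∈ Finset.range (2*k), ((mm r : ℝ)/B)) := by
            rw [Finset.mul_sum]
    exact absurd hlam (not_le.mpr hsum)
  -- per-class tail bounds
  have hperclass : ∀ r ∈ Finset.range (2*k),
      ((Up r).card : ℝ) + ((Lo r).card : ℝ)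
        ≤ 2 * Real.exp (-c*n) * ((L:ℝ)^2)^n := by
    intro r hrr
    have hr2k : r < 2*k := Finset.mem_range.mp hrr
    have hkmn : mm r * k ≤ n := (mr_facts k n r hk h4k hr2k).1
    have hnm : n ≤ 8*k*(mm r) := (mr_facts k n r hk h4k hr2k).2
    have hexpo : Real.exp (-(ε^2/(8*B)) * (mm r)) ≤ Real.exp (-c*n) := by
      rw [Real.exp_le_exp]
      have hcast : (n:ℝ) ≤ 8*(k:ℝ)*(mm r : ℝ) := by exact_mod_cast hnm
      have e6 : c * (8*(k:ℝ)*(mm r : ℝ)) = ε^2/(8*B) * (mm r : ℝ) := by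
        rw [hc]
        field_simp [hc]
        ring
      have h7 : c * (n:ℝ) ≤ c * (8*(k:ℝ)*(mm r:ℝ)) :=
        mul_le_mul_of_nonneg_left hcast (by positivity)
      nlinarith [h7, e6]
    have hpown : ((L:ℝ)^2)^(n - mm r * k) * B^(mm r) = ((L:ℝ)^2)^n := by
      rw [hB, ← pow_mul ((L:ℝ)^2) k (mm r), ← pow_add]
      congr 1
      have hcomm : k * mm r = mm r * k := Nat.mul_comm _ _
      omega
    -- upper tail
    have hup : ((Up r).card : ℝ) ≤ Real.exp (-c*n) * ((L:ℝ)^2)^n := by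
      have h1 : ((Up r).card : ℝ)
          ≤ (1+ε/2) ^ (-((1+ε)*(mm r)/B)) * ∑ lam : Fin n → Fin L × Fin L,
              ((1+ε/2) : ℝ) ^ (XX r lam) := by
        apply card_le_mgf_upper (XX r) (1+ε/2) ((1+ε)*(mm r)/B) (by linarith)
        intro lam hlam
        rw [hUp, Finset.mem_filter] at hlam
        exact hlam.2
      have h2 : ∑ lam : Fin n → Fin L × Fin L, ((1+ε/2) : ℝ) ^ (XX r lam)
          = ((L:ℝ)^2) ^ (n - mm r * k) * ((1+ε/2) - 1 + B) ^ (mm r) :=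
        class_mgf L k n r hk (by omega) h3k hr2k η (1+ε/2)
      have h3 : (1+ε/2) - 1 + B = B + ε/2 := by ring
      calc ((Up r).card : ℝ)
          ≤ (1+ε/2) ^ (-((1+ε)*(mm r)/B)) * (((L:ℝ)^2) ^ (n - mm r * k) * (B + ε/2) ^ (mm r)) := by
            rw [← h3]
            exact h1.trans (le_of_eq (by rw [h2]))
        _ = ((L:ℝ)^2) ^ (n - mm r * k) * ((1+ε/2) ^ (-((1+ε)*(mm r)/B)) * (B + ε/2) ^ (mm r)) := by
            ring
        _ ≤ ((L:ℝ)^2) ^ (n - mm r * k) * (Real.exp (-(ε^2/(8*B)) * (mm r)) * B ^ (mm r)) := by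
            apply mul_le_mul_of_nonneg_left (pow_unit_upper hε0 hε1 hB1 (mm r))
            positivity
        _ ≤ ((L:ℝ)^2) ^ (n - mm r * k) * (Real.exp (-c*n) * B ^ (mm r)) := by
            apply mul_le_mul_of_nonneg_left _ (by positivity)
            apply mul_le_mul_of_nonneg_right hexpo (by positivity)
        _ = Real.exp (-c*n) * (((L:ℝ)^2)^(n - mm r * k) * B^(mm r)) := by ring
        _ = Real.exp (-c*n) * ((L:ℝ)^2)^n := by rw [hpown]
    -- lower tail
    have hlo : ((Lo r).card : ℝ) ≤ Real.exp (-c*n) * ((L:ℝ)^2)^n := by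
      have h1 : ((Lo r).card : ℝ)
          ≤ (1-ε/2) ^ (-((1-ε)*(mm r)/B)) * ∑ lam : Fin n → Fin L × Fin L,
              ((1-ε/2) : ℝ) ^ (XX r lam) := by
        apply card_le_mgf_lower (XX r) (1-ε/2) ((1-ε)*(mm r)/B) (by linarith) (by linarith)
        intro lam hlam
        rw [hLo, Finset.mem_filter] at hlam
        exact hlam.2
      have h2 : ∑ lam : Fin n → Fin L × Fin L, ((1-ε/2) : ℝ) ^ (XX r lam)
          = ((L:ℝ)^2) ^ (n - mm r * k) * ((1-ε/2) - 1 + B) ^ (mm r) :=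
        class_mgf L k n r hk (by omega) h3k hr2k η (1-ε/2)
      have h3 : (1-ε/2) - 1 + B = B - ε/2 := by ring
      calc ((Lo r).card : ℝ)
          ≤ (1-ε/2) ^ (-((1-ε)*(mm r)/B)) * (((L:ℝ)^2) ^ (n - mm r * k) * (B - ε/2) ^ (mm r)) := by
            rw [← h3]
            exact h1.trans (le_of_eq (by rw [h2]))
        _ = ((L:ℝ)^2) ^ (n - mm r * k) * ((1-ε/2) ^ (-((1-ε)*(mm r)/B)) * (B - ε/2) ^ (mm r)) := by
            ring
        _ ≤ ((L:ℝ)^2) ^ (n - mm r * k) * (Real.exp (-(ε^2/(8*B)) * (mm r)) * B ^ (mm r)) := by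
            apply mul_le_mul_of_nonneg_left (pow_unit_lower hε0 hε1 hB1 (mm r))
            positivity
        _ ≤ ((L:ℝ)^2) ^ (n - mm r * k) * (Real.exp (-c*n) * B ^ (mm r)) := by
            apply mul_le_mul_of_nonneg_left _ (by positivity)
            apply mul_le_mul_of_nonneg_right hexpo (by positivity)
        _ = Real.exp (-c*n) * (((L:ℝ)^2)^(n - mm r * k) * B^(mm r)) := by ring
        _ = Real.exp (-c*n) * ((L:ℝ)^2)^n := by rw [hpown]
    linarith
  -- final assembly
  have hfinal : ((Finset.univ.filter P).card : ℝ)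
      ≤ ∑ r ∈ Finset.range (2*k), (((Up r).card : ℝ) + ((Lo r).card : ℝ)) := by
    have step1 : (Finset.univ.filter P).card
        ≤ ∑ r ∈ Finset.range (2*k), ((Up r) ∪ (Lo r)).card :=
      le_trans (Finset.card_le_card hsub) (Finset.card_biUnion_le)
    have step2 : ∀ r ∈ Finset.range (2*k),
        ((Up r) ∪ (Lo r)).card ≤ (Up r).card + (Lo r).card :=
      fun r _ => Finset.card_union_le _ _
    calc ((Finset.univ.filter P).card : ℝ)
        ≤ (∑ r ∈ Finset.range (2*k), ((Up r) ∪ (Lo r)).card : ℕ) := by exact_mod_cast step1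
      _ ≤ (∑ r ∈ Finset.range (2*k), ((Up r).card + (Lo r).card) : ℕ) := by
          exact_mod_cast Finset.sum_le_sum step2
      _ = ∑ r ∈ Finset.range (2*k), (((Up r).card : ℝ) + ((Lo r).card : ℝ)) := by
          push_cast
          rfl
  calc ((Finset.univ.filter P).card : ℝ)
      ≤ ∑ r ∈ Finset.range (2*k), (((Up r).card : ℝ) + ((Lo r).card : ℝ)) := hfinal
    _ ≤ ∑ r ∈ Finset.range (2*k), 2 * Real.exp (-c*n) * ((L:ℝ)^2)^n :=
        Finset.sum_le_sum hperclass
    _ = (2*k) * (2 * Real.exp (-c*n) * ((L:ℝ)^2)^n) := by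
        rw [Finset.sum_const, Finset.card_range]
        push_cast
        ring
    _ = (4*k) * Real.exp (-c*n) * ((L:ℝ)^2)^n := by push_cast; ring
    _ = (4*k) * Real.exp (-c*n) * (L:ℝ)^(2*n) := by rw [← pow_mul]
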